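/- Let G be a connected bipartite simple undirected graph on n ≥ 3 vertices with m edges, and let λ₁ be the largest eigenvalue of its adjacency matrix A(G). If k is a real number with 2m/n ≤ k ≤ λ₁, then the energy of G satisfies E(G) ≤ 2k + √( (n−2)(2m − 2k²) ). -/

import Mathlib

open Polynomial Matrix Finset

private lemma myEvalCharpoly {n : ℕ} (M : Matrix (Fin n) (Fin n) ℝ) (x : ℝ) :
    M.charpoly.eval x = (x • (1 : Matrix (Fin n) (Fin n) ℝ) - M).det := by
  rw [Matrix.charpoly, ← Polynomial.coe_evalRingHom, RingHom.map_det]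
  congr 1
  ext i j
  by_cases h : i = j <;>
    simp [Matrix.charmatrix_apply, Matrix.map_apply, Matrix.one_apply,
      Matrix.diagonal_apply, h, Matrix.sub_apply, Matrix.smul_apply]

private lemma myMono (N mm a k : ℝ) (hN : 3 ≤ N) (hm1 : N ≤ 2 * mm)
    (hk : 2 * mm / N ≤ k) (hak : k ≤ a) (ha : 2 * a ^ 2 ≤ 2 * mm) :
    2 * a + Real.sqrt ((N - 2) * (2 * mm - 2 * a ^ 2)) ≤
      2 * k + Real.sqrt ((N - 2) * (2 * mm - 2 * k ^ 2)) := by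
  have hN0 : (0 : ℝ) < N := by linarith
  have hk1 : (1 : ℝ) ≤ k := le_trans ((one_le_div hN0).2 hm1) hk
  have hNk : 2 * mm ≤ N * k := by
    rw [div_le_iff₀ hN0] at hk; linarith [hk]
  have hk2 : 2 * mm ≤ N * k ^ 2 := by nlinarith
  have ha2 : 2 * mm ≤ N * a ^ 2 := by nlinarith [mul_le_mul_of_nonneg_left (by nlinarith : k ^ 2 ≤ a ^ 2) hN0.le]
  have hk3 : 2 * k ^ 2 ≤ 2 * mm := by nlinarith
  set u := Real.sqrt ((N - 2) * (2 * mm - 2 * k ^ 2)) with hu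
  set v := Real.sqrt ((N - 2) * (2 * mm - 2 * a ^ 2)) with hv
  have hu0 : 0 ≤ u := Real.sqrt_nonneg _
  have hv0 : 0 ≤ v := Real.sqrt_nonneg _
  have hu2 : u ^ 2 = (N - 2) * (2 * mm - 2 * k ^ 2) :=
    Real.sq_sqrt (by nlinarith)
  have hv2 : v ^ 2 = (N - 2) * (2 * mm - 2 * a ^ 2) :=
    Real.sq_sqrt (by nlinarith)
  have hub : u ≤ (N - 2) * k := by
    rw [hu]
    calc Real.sqrt ((N - 2) * (2 * mm - 2 * k ^ 2)) ≤ Real.sqrt (((N - 2) * k) ^ 2) :=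
          Real.sqrt_le_sqrt (by nlinarith)
      _ = (N - 2) * k := Real.sqrt_sq (by nlinarith)
  have hvb : v ≤ (N - 2) * a := by
    rw [hv]
    calc Real.sqrt ((N - 2) * (2 * mm - 2 * a ^ 2)) ≤ Real.sqrt (((N - 2) * a) ^ 2) :=
          Real.sqrt_le_sqrt (by nlinarith)
      _ = (N - 2) * a := Real.sqrt_sq (by nlinarith)
  clear_value u v
  rcases lt_or_ge k a with hlt | hge
  swap
  · have heq : a = k := le_antisymm hge hak
    subst heq
    rw [hu, hv]
  · have hvu : v < u := by
      have h2 : v ^ 2 < u ^ 2 := by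
        rw [hu2, hv2]
        have h5 : 0 < 2 * a ^ 2 - 2 * k ^ 2 := by nlinarith
        nlinarith [mul_pos (show (0:ℝ) < N - 2 by linarith) h5]
      by_contra hc
      push_neg at hc
      nlinarith
    have hpos : 0 < u + v := by linarith
    have key : 2 * (a - k) * (u + v) ≤ (u - v) * (u + v) := by
      have h3 : u + v ≤ (N - 2) * (a + k) := by linarith
      have h4 : 2 * (a - k) * (u + v) ≤ 2 * (a - k) * ((N - 2) * (a + k)) :=
        mul_le_mul_of_nonneg_left h3 (by linarith)
      have h5 : (u - v) * (u + v) = 2 * (a - k) * ((N - 2) * (a + k)) := by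
        have : u ^ 2 - v ^ 2 = 2 * (a - k) * ((N - 2) * (a + k)) := by rw [hu2, hv2]; ring
        linear_combination this
      linarith
    have := (mul_le_mul_iff_of_pos_right hpos).1 key
    linarith

/-- For a connected bipartite graph `G` on `n ≥ 3` vertices with `m` edges, largest
adjacency eigenvalue `λ₁`, and any real `k` with `2m/n ≤ k ≤ λ₁`, the energy satisfies
`E(G) ≤ 2k + √((n−2)(2m − 2k²))`. The eigenvalues `λ` (with multiplicity, nonincreasing)
are specified through the factorization of the characteristic polynomial of `A(G)`;
bipartiteness is expressed as 2-colorability. -/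
theorem stmt_9 {n : ℕ} (hn : 3 ≤ n) (G : SimpleGraph (Fin n)) [DecidableRel G.Adj]
    (hconn : G.Connected) (hbip : G.Colorable 2) (m : ℕ) (hm : m = G.edgeFinset.card)
    (lam : Fin n → ℝ) (hlam : Antitone lam)
    (hchar : (SimpleGraph.adjMatrix ℝ G).charpoly =
      ∏ i, (Polynomial.X - Polynomial.C (lam i)))
    (k : ℝ) (hk1 : 2 * (m : ℝ) / n ≤ k) (hk2 : k ≤ lam ⟨0, by omega⟩) :
    ∑ i, |lam i| ≤ 2 * k + Real.sqrt ((n - 2) * (2 * m - 2 * k ^ 2)) := by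
  have hn0 : 0 < n := by omega
  set A := G.adjMatrix ℝ with hA
  -- evaluation identities
  have hev : ∀ x : ℝ, (x • (1 : Matrix (Fin n) (Fin n) ℝ) - A).det = ∏ i, (x - lam i) := by
    intro x
    rw [← myEvalCharpoly, hchar]
    simp [Polynomial.eval_prod]
  have hplus : ∀ x : ℝ, (x • (1 : Matrix (Fin n) (Fin n) ℝ) + A).det = ∏ i, (x + lam i) := by
    intro x
    have h1 := hev (-x)
    have h2 : ((-x) • (1 : Matrix (Fin n) (Fin n) ℝ) - A) = -(x • 1 + A) := by
      ext i j
      simp [Matrix.sub_apply, Matrix.add_apply, Matrix.smul_apply, Matrix.neg_apply]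
      ring
    rw [h2, Matrix.det_neg] at h1
    have h3 : ∏ i, (-x - lam i) = ∏ i : Fin n, (-1 : ℝ) * (x + lam i) := by
      apply Finset.prod_congr rfl; intro i _; ring
    rw [h3, Finset.prod_mul_distrib, Finset.prod_const] at h1
    have hcard : (Finset.univ : Finset (Fin n)).card = n := by simp
    rw [Fintype.card_fin, hcard] at h1
    have hne : ((-1 : ℝ) ^ n) ≠ 0 := pow_ne_zero _ (by norm_num)
    exact mul_left_cancel₀ hne h1
  -- bipartite sign matrix
  obtain ⟨C⟩ := hbip
  set d : Fin n → ℝ := fun i => if C i = 0 then 1 else -1 with hd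
  have hdd : ∀ i, d i * d i = 1 := by
    intro i; by_cases h : C i = 0 <;> simp [hd, h]
  have hD2 : Matrix.diagonal d * Matrix.diagonal d = 1 := by
    rw [Matrix.diagonal_mul_diagonal]
    have : (fun i => d i * d i) = fun _ => (1 : ℝ) := funext hdd
    rw [this, Matrix.diagonal_one]
  have hdetD : (Matrix.diagonal d).det * (Matrix.diagonal d).det = 1 := by
    rw [← Matrix.det_mul, hD2, Matrix.det_one]
  have hDAD : Matrix.diagonal d * A * Matrix.diagonal d = -A := by
    ext i j
    rw [Matrix.mul_diagonal, Matrix.diagonal_mul, Matrix.neg_apply]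
    by_cases h : G.Adj i j
    · have hne := C.valid h
      have hd1 : d i * d j = -1 := by
        by_cases hi : C i = 0
        · have hj : ¬ C j = 0 := by rw [hi] at hne; exact fun hj => hne hj.symm
          simp [hd, hi, hj]
        · have hj : C j = 0 := by
            have := Fin.exists_fin_two.mp ⟨C j, rfl⟩
            rcases (by omega : (C j : Fin 2).val = 0 ∨ (C j : Fin 2).val = 1) with h0 | h1
            · exact Fin.ext h0
            · exfalso
              apply hi
              have hcj : C j = 1 := Fin.ext h1
              have : C i ≠ 1 := fun hh => hne (hh.trans hcj.symm)
              rcases (by omega : (C i : Fin 2).val = 0 ∨ (C i : Fin 2).val = 1) with g0 | g1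
              · exact Fin.ext g0
              · exact absurd (Fin.ext g1) this
          simp [hd, hi, hj]
      rw [hA]
      simp only [SimpleGraph.adjMatrix_apply, if_pos h]
      linarith [hd1]
    · rw [hA]
      simp [SimpleGraph.adjMatrix_apply, h]
  have hsymm : ∀ x : ℝ, ∏ i, (x - lam i) = ∏ i, (x + lam i) := by
    intro x
    rw [← hev, ← hplus]
    have hfac : x • (1 : Matrix (Fin n) (Fin n) ℝ) - A =
        Matrix.diagonal d * (x • 1 + A) * Matrix.diagonal d := by
      rw [Matrix.mul_add, Matrix.add_mul, hDAD]
      have h1 : Matrix.diagonal d * (x • (1 : Matrix (Fin n) (Fin n) ℝ)) * Matrix.diagonal d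
          = x • 1 := by
        rw [mul_smul_comm, smul_mul_assoc, mul_one, hD2]
      rw [h1]
      abel
    rw [hfac, Matrix.det_mul, Matrix.det_mul]
    rw [show (Matrix.diagonal d).det * (x • (1 : Matrix (Fin n) (Fin n) ℝ) + A).det *
        (Matrix.diagonal d).det =
        ((Matrix.diagonal d).det * (Matrix.diagonal d).det) * (x • 1 + A).det from by ring,
      hdetD, one_mul]
  -- extremal eigenvalues are opposite
  set i0 : Fin n := ⟨0, by omega⟩ with hi0
  set il : Fin n := ⟨n - 1, by omega⟩ with hil
  have hi0il : i0 ≠ il := by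
    simp only [hi0, hil, Ne, Fin.ext_iff]
    omega
  have hroot1 : ∃ j, lam j = -lam i0 := by
    have e1 := hsymm (-lam i0)
    have hz : ∏ i, (-lam i0 + lam i) = 0 :=
      Finset.prod_eq_zero (Finset.mem_univ i0) (by ring)
    rw [hz] at e1
    obtain ⟨j, _, hj⟩ := Finset.prod_eq_zero_iff.mp e1
    exact ⟨j, by linarith⟩
  have hroot2 : ∃ j, lam j = -lam il := by
    have e2 := hsymm (-lam il)
    have hz : ∏ i, (-lam il + lam i) = 0 :=
      Finset.prod_eq_zero (Finset.mem_univ il) (by ring)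
    rw [hz] at e2
    obtain ⟨j, _, hj⟩ := Finset.prod_eq_zero_iff.mp e2
    exact ⟨j, by linarith⟩
  have hmax : ∀ j, lam j ≤ lam i0 := fun j => hlam (by simp [hi0, Fin.le_def])
  have hmin : ∀ j, lam il ≤ lam j := fun j => hlam (by simp [hil, Fin.le_def]; omega)
  have hneg : lam il = -lam i0 := by
    obtain ⟨j1, hj1⟩ := hroot1
    obtain ⟨j2, hj2⟩ := hroot2
    have h1 := hmin j1
    have h2 := hmax j2
    rw [hj1] at h1
    rw [hj2] at h2
    linarith
  -- sum of squares = 2m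
  have hAA : (A * A).charpoly = ∏ i, (Polynomial.X - Polynomial.C (lam i ^ 2)) := by
    apply Polynomial.eq_of_infinite_eval_eq
    apply Set.Infinite.mono _ (Set.Ici_infinite (0 : ℝ))
    intro x hx
    have hx0 : (0 : ℝ) ≤ x := hx
    simp only [Set.mem_setOf_eq]
    set s := Real.sqrt x with hs
    have hss : s * s = x := Real.mul_self_sqrt hx0
    have hfac : x • (1 : Matrix (Fin n) (Fin n) ℝ) - A * A = (s • 1 - A) * (s • 1 + A) := by
      rw [sub_mul, Matrix.mul_add, Matrix.mul_add, smul_mul_assoc, one_mul, smul_mul_assoc,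
        one_mul, mul_smul_comm, smul_smul, hss, mul_one]
      abel
    rw [myEvalCharpoly, hfac, Matrix.det_mul, hev, hplus, ← Finset.prod_mul_distrib,
      Polynomial.eval_prod]
    apply Finset.prod_congr rfl
    intro i _
    simp only [Polynomial.eval_sub, Polynomial.eval_X, Polynomial.eval_C]
    nlinarith [hss]
  have hne' : Nonempty (Fin n) := ⟨i0⟩
  have htr1 : (A * A).trace = ∑ i, lam i ^ 2 := by
    rw [Matrix.trace_eq_neg_charpoly_coeff, hAA, Fintype.card_fin]
    have hdeg : (∏ i : Fin n, (Polynomial.X - Polynomial.C (lam i ^ 2))).natDegree = n := by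
      rw [Polynomial.natDegree_prod _ _ (fun i _ => Polynomial.X_sub_C_ne_zero _)]
      simp only [Polynomial.natDegree_X_sub_C, Finset.sum_const, Finset.card_univ,
        Fintype.card_fin, smul_eq_mul, mul_one]
    have hnc := Polynomial.prod_X_sub_C_nextCoeff (s := (Finset.univ : Finset (Fin n)))
      (fun i => lam i ^ 2)
    rw [Polynomial.nextCoeff, hdeg, if_neg (by omega)] at hnc
    rw [hnc]
    simp
  have htr2 : (A * A).trace = 2 * (m : ℝ) := by
    rw [Matrix.trace]
    have : ∀ i : Fin n, (A * A).diag i = (G.degree i : ℝ) := fun i =>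
      G.adjMatrix_mul_self_apply_self i
    rw [Finset.sum_congr rfl (fun i _ => this i)]
    rw [← Nat.cast_sum]
    rw [G.sum_degrees_eq_twice_card_edges]
    push_cast [hm]
    ring
  have hsq : ∑ i, lam i ^ 2 = 2 * (m : ℝ) := by rw [← htr1, htr2]
  -- minimum degree at least one
  have hdeg1 : ∀ v : Fin n, 1 ≤ G.degree v := by
    intro v
    have hnt : Nontrivial (Fin n) := Fin.nontrivial_iff_two_le.mpr (by omega)
    obtain ⟨w, hw⟩ := exists_ne v
    obtain ⟨p⟩ := hconn.preconnected v w
    cases p with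
    | nil => exact absurd rfl hw
    | cons h q => exact (G.degree_pos_iff_exists_adj v).mpr ⟨_, h⟩
  have hnm : (n : ℝ) ≤ 2 * m := by
    have h1 : n ≤ ∑ v : Fin n, G.degree v := by
      calc n = ∑ _v : Fin n, 1 := by simp
        _ ≤ ∑ v, G.degree v := Finset.sum_le_sum fun i _ => hdeg1 i
    rw [G.sum_degrees_eq_twice_card_edges, ← hm] at h1
    exact_mod_cast h1
  have hnR : (0 : ℝ) < n := by exact_mod_cast hn0
  have hk1' : (1 : ℝ) ≤ k := le_trans ((one_le_div hnR).2 hnm) hk1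
  set a := lam i0 with ha'
  have hak : k ≤ a := hk2
  have ha1 : 1 ≤ a := le_trans hk1' hak
  set P : Finset (Fin n) := {i0, il} with hP
  have hPsub : P ⊆ Finset.univ := Finset.subset_univ _
  have hsplit : ∀ f : Fin n → ℝ,
      ∑ i, f i = (∑ i ∈ Finset.univ \ P, f i) + (f i0 + f il) := by
    intro f
    rw [← Finset.sum_sdiff hPsub]
    congr 1
    rw [hP]
    exact Finset.sum_pair hi0il
  have hcardS : (Finset.univ \ P).card = n - 2 := by
    rw [Finset.card_sdiff_of_subset hPsub, hP, Finset.card_pair hi0il]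
    simp
  have hsq' : ∑ i ∈ Finset.univ \ P, lam i ^ 2 = 2 * m - 2 * a ^ 2 := by
    have h1 := hsplit fun i => lam i ^ 2
    rw [hsq] at h1
    have h2 : lam il ^ 2 = a ^ 2 := by rw [hneg]; ring
    simp only [h2] at h1
    linarith
  have hSnn : (0 : ℝ) ≤ ∑ i ∈ Finset.univ \ P, lam i ^ 2 :=
    Finset.sum_nonneg fun i _ => sq_nonneg _
  have ha2m : 2 * a ^ 2 ≤ 2 * (m : ℝ) := by linarith
  have hCS : (∑ i ∈ Finset.univ \ P, |lam i|) ≤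
      Real.sqrt (((n : ℝ) - 2) * (2 * m - 2 * a ^ 2)) := by
    have h1 := Finset.sum_mul_sq_le_sq_mul_sq (Finset.univ \ P)
      (fun _ => (1 : ℝ)) fun i => |lam i|
    simp only [one_mul, one_pow, sq_abs, Finset.sum_const, nsmul_eq_mul, mul_one] at h1
    have hc : ((Finset.univ \ P).card : ℝ) = (n : ℝ) - 2 := by
      rw [hcardS]
      push_cast [Nat.cast_sub (show 2 ≤ n by omega)]
      ring
    have h2 : (∑ i ∈ Finset.univ \ P, |lam i|) ^ 2 ≤ ((n : ℝ) - 2) * (2 * m - 2 * a ^ 2) := by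
      rw [← hsq', ← hc]
      exact h1
    have h3 : ∑ i ∈ Finset.univ \ P, |lam i| =
        Real.sqrt ((∑ i ∈ Finset.univ \ P, |lam i|) ^ 2) :=
      (Real.sqrt_sq (Finset.sum_nonneg fun i _ => abs_nonneg _)).symm
    rw [h3]
    exact Real.sqrt_le_sqrt h2
  rw [hsplit fun i => |lam i|]
  have habs0 : |lam i0| = a := abs_of_pos (by linarith)
  have habsl : |lam il| = a := by rw [hneg, abs_neg]; exact habs0
  simp only [habs0, habsl]
  have hfin := myMono (n : ℝ) (m : ℝ) a k (by exact_mod_cast hn) hnm hk1 hak ha2m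
  linarith [hCS, hfin]
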